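/- If the joined path γ₁ followed by γ₂ is well-formed (γ₁(1) = γ₂(0)), both γ₁ and γ₂ are continuous paths, and each has finitely many real-part-constancy segments with respect to z₀, then the join γ₁ ++ γ₂ also has finitely many real-part-constancy segments with respect to z₀. -/

import Mathlib

open Complex Filter Topology Polynomial Set

/-- Joining two paths parametrised on `[0,1]`. -/
noncomputable def joinPaths (γ₁ γ₂ : ℝ → ℂ) : ℝ → ℂ :=
  fun t => if t ≤ 1/2 then γ₁ (2 * t) else γ₂ (2 * t - 1)

/-- A predicate `P` admits a finite segmentation of `[a,b]`. -/
inductive FinitePsegments (P : ℝ → Prop) : ℝ → ℝ → Prop where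
  | emptyI (a b : ℝ) (hab : b ≤ a) : FinitePsegments P a b
  | insertI_1 (a b s : ℝ) (hs : s ∈ Set.Ico a b) (h0 : s = a ∨ P s)
      (hP : ∀ t ∈ Set.Ioo s b, P t) (hrec : FinitePsegments P a s) :
      FinitePsegments P a b
  | insertI_2 (a b s : ℝ) (hs : s ∈ Set.Ico a b) (h0 : s = a ∨ P s)
      (hP : ∀ t ∈ Set.Ioo s b, ¬ P t) (hrec : FinitePsegments P a s) :
      FinitePsegments P a b

/-- `[0,1]` decomposes into finitely many consecutive subintervals on each of whose
interiors `Re (γ t - z) = 0` holds identically or fails identically. -/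
def finiteReZSegments (γ : ℝ → ℂ) (z : ℂ) : Prop :=
  FinitePsegments (fun t => (γ t - z).re = 0) 0 1

lemma FinitePsegments.restrict {P : ℝ → Prop} {a b : ℝ}
    (h : FinitePsegments P a b) : ∀ c, c ≤ b → FinitePsegments P a c := by
  induction h with
  | emptyI b hab => exact fun c hc => .emptyI _ c (hc.trans hab)
  | insertI_1 b s hs h0 hP hrec ih =>
      intro c hc
      rcases le_or_gt c s with h' | h'
      · exact ih c h'
      · exact .insertI_1 a c s ⟨hs.1, h'⟩ h0 (fun t ht => hP t ⟨ht.1, ht.2.trans_le hc⟩) hrec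
  | insertI_2 b s hs h0 hP hrec ih =>
      intro c hc
      rcases le_or_gt c s with h' | h'
      · exact ih c h'
      · exact .insertI_2 a c s ⟨hs.1, h'⟩ h0 (fun t ht => hP t ⟨ht.1, ht.2.trans_le hc⟩) hrec

lemma FinitePsegments.congr {P Q : ℝ → Prop} {a b : ℝ}
    (h : FinitePsegments P a b) (hpq : ∀ t, a ≤ t → t < b → (P t ↔ Q t)) :
    FinitePsegments Q a b := by
  induction h with
  | emptyI b hab => exact .emptyI _ b hab
  | insertI_1 b s hs h0 hP hrec ih =>
      refine .insertI_1 a b s hs ?_ ?_ (ih fun t h1 h2 => hpq t h1 (h2.trans hs.2))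
      · rcases h0 with h | h
        · exact Or.inl h
        · exact Or.inr ((hpq s hs.1 hs.2).mp h)
      · intro t ht
        exact (hpq t (hs.1.trans ht.1.le) ht.2).mp (hP t ht)
  | insertI_2 b s hs h0 hP hrec ih =>
      refine .insertI_2 a b s hs ?_ ?_ (ih fun t h1 h2 => hpq t h1 (h2.trans hs.2))
      · rcases h0 with h | h
        · exact Or.inl h
        · exact Or.inr ((hpq s hs.1 hs.2).mp h)
      · intro t ht hQ
        exact hP t ht ((hpq t (hs.1.trans ht.1.le) ht.2).mpr hQ)

lemma FinitePsegments.reparam {P : ℝ → Prop} {a b : ℝ} (c d : ℝ) (hc : 0 < c)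
    (h : FinitePsegments P a b) :
    FinitePsegments (fun t => P (c * t + d)) ((a - d) / c) ((b - d) / c) := by
  have key : ∀ x : ℝ, c * ((x - d) / c) + d = x := fun x => by field_simp; ring
  induction h with
  | emptyI b hab => exact .emptyI _ _ ((div_le_div_iff_of_pos_right hc).mpr (by linarith))
  | insertI_1 b s hs h0 hP hrec ih =>
      refine .insertI_1 _ _ ((s - d) / c)
        ⟨(div_le_div_iff_of_pos_right hc).mpr (by linarith [hs.1]),
         (div_lt_div_iff_of_pos_right hc).mpr (by linarith [hs.2])⟩ ?_ ?_ ih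
      · rcases h0 with h | h
        · exact Or.inl (by rw [h])
        · exact Or.inr (by rw [key]; exact h)
      · intro t ht
        have h1 : s - d < t * c := (div_lt_iff₀ hc).mp ht.1
        have h2 : t * c < b - d := (lt_div_iff₀ hc).mp ht.2
        exact hP (c * t + d) ⟨by nlinarith, by nlinarith⟩
  | insertI_2 b s hs h0 hP hrec ih =>
      refine .insertI_2 _ _ ((s - d) / c)
        ⟨(div_le_div_iff_of_pos_right hc).mpr (by linarith [hs.1]),
         (div_lt_div_iff_of_pos_right hc).mpr (by linarith [hs.2])⟩ ?_ ?_ ih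
      · rcases h0 with h | h
        · exact Or.inl (by rw [h])
        · exact Or.inr (by rw [key]; exact h)
      · intro t ht
        have h1 : s - d < t * c := (div_lt_iff₀ hc).mp ht.1
        have h2 : t * c < b - d := (lt_div_iff₀ hc).mp ht.2
        exact hP (c * t + d) ⟨by nlinarith, by nlinarith⟩

lemma FinitePsegments.concat (f : ℝ → ℝ) {a m b : ℝ} (ham : a ≤ m)
    (hL : Filter.Tendsto f (nhdsWithin m (Set.Iio m)) (nhds (f m)))
    (hR : Filter.Tendsto f (nhdsWithin m (Set.Ioi m)) (nhds (f m)))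
    (hA : FinitePsegments (fun t => f t = 0) a m)
    (hB : FinitePsegments (fun t => f t = 0) m b) :
    FinitePsegments (fun t => f t = 0) a b := by
  have key : ∀ x y : ℝ, FinitePsegments (fun t => f t = 0) x y → x = m →
      FinitePsegments (fun t => f t = 0) a y := by
    intro x y h
    induction h with
    | emptyI y hxy => exact fun hx => hA.restrict y (hx ▸ hxy)
    | insertI_1 y s hs h0 hP hrec ih =>
        rintro rfl
        have hPs : f s = 0 := by
          rcases h0 with rfl | h
          · have hmem : Set.Ioo s y ∈ nhdsWithin s (Set.Ioi s) :=
              Ioo_mem_nhdsGT_of_mem ⟨le_rfl, hs.2⟩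
            have h2 : Filter.Tendsto f (nhdsWithin s (Set.Ioi s)) (nhds 0) :=
              Filter.Tendsto.congr'
                (by filter_upwards [hmem] with t ht using (hP t ht).symm)
                tendsto_const_nhds
            exact tendsto_nhds_unique hR h2
          · exact h
        exact .insertI_1 a y s ⟨ham.trans hs.1, hs.2⟩ (Or.inr hPs) hP (ih rfl)
    | insertI_2 y s hs h0 hP hrec ih =>
        rintro rfl
        by_cases hPs : f s = 0
        · exact .insertI_2 a y s ⟨ham.trans hs.1, hs.2⟩ (Or.inr hPs) hP (ih rfl)
        · have hsx : s = x := h0.resolve_right hPs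
          subst hsx
          rcases eq_or_lt_of_le ham with rfl | ham'
          · exact .insertI_2 a y a ⟨le_rfl, hs.2⟩ (Or.inl rfl) hP (ih rfl)
          · cases hA with
            | emptyI _ h' => exact absurd (ham'.trans_le h') (lt_irrefl a)
            | insertI_1 _ s'' hs'' h0'' hP'' hrec'' =>
                exfalso
                have hmem : Set.Ioo s'' s ∈ nhdsWithin s (Set.Iio s) :=
                  Ioo_mem_nhdsLT_of_mem ⟨hs''.2, le_rfl⟩
                have h2 : Filter.Tendsto f (nhdsWithin s (Set.Iio s)) (nhds 0) :=
                  Filter.Tendsto.congr'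
                    (by filter_upwards [hmem] with t ht using (hP'' t ht).symm)
                    tendsto_const_nhds
                exact hPs (tendsto_nhds_unique hL h2)
            | insertI_2 _ s'' hs'' h0'' hP'' hrec'' =>
                refine .insertI_2 a y s'' ⟨hs''.1, hs''.2.trans hs.2⟩ h0'' ?_ hrec''
                intro t ht
                rcases lt_trichotomy t s with h' | h' | h'
                · exact hP'' t ⟨ht.1, h'⟩
                · exact h' ▸ hPs
                · exact hP t ⟨h', ht.2⟩
  exact key m b hB rfl

theorem finite_ReZ_segments_joinpaths (γ₁ γ₂ : ℝ → ℂ) (z₀ : ℂ)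
    (h1 : finiteReZSegments γ₁ z₀) (h2 : finiteReZSegments γ₂ z₀)
    (hp1 : ContinuousOn γ₁ (Set.Icc 0 1)) (hp2 : ContinuousOn γ₂ (Set.Icc 0 1))
    (hjoin : γ₁ 1 = γ₂ 0) :
    finiteReZSegments (joinPaths γ₁ γ₂) z₀ := by
  unfold finiteReZSegments at h1 h2 ⊢
  -- the left half
  have rA := h1.reparam 2 0 (by norm_num)
  rw [show ((0:ℝ) - 0)/2 = 0 by norm_num, show ((1:ℝ) - 0)/2 = 1/2 by norm_num] at rA
  have hA : FinitePsegments (fun t => (joinPaths γ₁ γ₂ t - z₀).re = 0) 0 (1/2) := by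
    refine rA.congr ?_
    intro t ht0 ht1
    have hjp : joinPaths γ₁ γ₂ t = γ₁ (2 * t) := by
      unfold joinPaths; rw [if_pos ht1.le]
    show (γ₁ (2 * t + 0) - z₀).re = 0 ↔ (joinPaths γ₁ γ₂ t - z₀).re = 0
    rw [add_zero, hjp]
  -- the right half
  have rB := h2.reparam 2 (-1) (by norm_num)
  rw [show ((0:ℝ) - (-1))/2 = 1/2 by norm_num, show ((1:ℝ) - (-1))/2 = 1 by norm_num] at rB
  have hB : FinitePsegments (fun t => (joinPaths γ₁ γ₂ t - z₀).re = 0) (1/2) 1 := by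
    refine rB.congr ?_
    intro t ht0 ht1
    show (γ₂ (2 * t + -1) - z₀).re = 0 ↔ (joinPaths γ₁ γ₂ t - z₀).re = 0
    rcases eq_or_lt_of_le ht0 with h' | h'
    · subst h'
      norm_num [joinPaths, hjoin]
    · have hjp : joinPaths γ₁ γ₂ t = γ₂ (2 * t - 1) := by
        unfold joinPaths; rw [if_neg (not_le.mpr h')]
      rw [show (2:ℝ) * t + -1 = 2 * t - 1 by ring, hjp]
  -- value at the junction
  have hhalf : joinPaths γ₁ γ₂ (1/2 : ℝ) = γ₁ 1 := by
    norm_num [joinPaths]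
  -- left-hand limit
  have hL : Filter.Tendsto (fun t => (joinPaths γ₁ γ₂ t - z₀).re) (nhdsWithin (1/2 : ℝ) (Set.Iio (1/2)))
      (nhds ((joinPaths γ₁ γ₂ (1/2 : ℝ) - z₀).re)) := by
    rw [hhalf]
    have c1 : Filter.Tendsto γ₁ (nhdsWithin 1 (Set.Icc (0:ℝ) 1)) (nhds (γ₁ 1)) :=
      hp1 1 (by constructor <;> norm_num)
    have t2 : Filter.Tendsto (fun t : ℝ => 2 * t) (nhdsWithin (1/2 : ℝ) (Set.Iio (1/2)))
        (nhdsWithin 1 (Set.Icc (0:ℝ) 1)) := by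
      apply tendsto_nhdsWithin_of_tendsto_nhds_of_eventually_within
      · have h' : Filter.Tendsto (fun t : ℝ => 2 * t) (nhds (1/2 : ℝ)) (nhds 1) :=
          Continuous.tendsto' (by continuity) _ _ (by norm_num)
        exact h'.mono_left nhdsWithin_le_nhds
      · have hmem : Set.Ioo (0:ℝ) (1/2) ∈ nhdsWithin (1/2 : ℝ) (Set.Iio (1/2)) :=
          Ioo_mem_nhdsLT_of_mem ⟨by norm_num, le_rfl⟩
        filter_upwards [hmem] with t ht
        exact ⟨by linarith [ht.1], by linarith [ht.2]⟩
    have key : Filter.Tendsto (fun t : ℝ => (γ₁ (2 * t) - z₀).re)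
        (nhdsWithin (1/2 : ℝ) (Set.Iio (1/2))) (nhds ((γ₁ 1 - z₀).re)) :=
      (Complex.continuous_re.tendsto _).comp ((c1.comp t2).sub tendsto_const_nhds)
    refine Filter.Tendsto.congr' ?_ key
    filter_upwards [self_mem_nhdsWithin] with t ht
    have : t ≤ 1/2 := le_of_lt (Set.mem_Iio.mp ht)
    unfold joinPaths; rw [if_pos this]
  -- right-hand limit
  have hR : Filter.Tendsto (fun t => (joinPaths γ₁ γ₂ t - z₀).re) (nhdsWithin (1/2 : ℝ) (Set.Ioi (1/2)))
      (nhds ((joinPaths γ₁ γ₂ (1/2 : ℝ) - z₀).re)) := by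
    rw [hhalf, hjoin]
    have c2 : Filter.Tendsto γ₂ (nhdsWithin 0 (Set.Icc (0:ℝ) 1)) (nhds (γ₂ 0)) :=
      hp2 0 (by constructor <;> norm_num)
    have t2 : Filter.Tendsto (fun t : ℝ => 2 * t - 1) (nhdsWithin (1/2 : ℝ) (Set.Ioi (1/2)))
        (nhdsWithin 0 (Set.Icc (0:ℝ) 1)) := by
      apply tendsto_nhdsWithin_of_tendsto_nhds_of_eventually_within
      · have h' : Filter.Tendsto (fun t : ℝ => 2 * t - 1) (nhds (1/2 : ℝ)) (nhds 0) :=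
          Continuous.tendsto' (by continuity) _ _ (by norm_num)
        exact h'.mono_left nhdsWithin_le_nhds
      · have hmem : Set.Ioo (1/2 : ℝ) 1 ∈ nhdsWithin (1/2 : ℝ) (Set.Ioi (1/2)) :=
          Ioo_mem_nhdsGT_of_mem ⟨le_rfl, by norm_num⟩
        filter_upwards [hmem] with t ht
        exact ⟨by linarith [ht.1], by linarith [ht.2]⟩
    have key : Filter.Tendsto (fun t : ℝ => (γ₂ (2 * t - 1) - z₀).re)
        (nhdsWithin (1/2 : ℝ) (Set.Ioi (1/2))) (nhds ((γ₂ 0 - z₀).re)) :=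
      (Complex.continuous_re.tendsto _).comp ((c2.comp t2).sub tendsto_const_nhds)
    refine Filter.Tendsto.congr' ?_ key
    filter_upwards [self_mem_nhdsWithin] with t ht
    have : ¬ t ≤ 1/2 := not_le.mpr (Set.mem_Ioi.mp ht)
    unfold joinPaths; rw [if_neg this]
  exact FinitePsegments.concat (fun t => (joinPaths γ₁ γ₂ t - z₀).re) (by norm_num) hL hR hA hB
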